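/- Let S ⊊ {1,…,n}, let (i₁,t₁,S) and (i₂,t₂,S) be vine curve triples with t₁ ≥ 2 and t₂ ≥ 2, and let k₁, k₂ ∈ ℤ with (i₁,t₁,k₁) ≠ (i₂,t₂,k₂). If H(i₁,t₁,S;k₁) = H(i₂,t₂,S;k₂) (as subsets of W), then 2i₁ + t₁ = 2i₂ + t₂. -/

import Mathlib

namespace Paper

/-- A vine curve triple `(i,t,S)` for genus `g` and `n` markings
(markings are `{1,…,n}` and `S` always contains the first marking `1`). -/
def VineTriple (g n i t : ℕ) (S : Finset ℕ) : Prop :=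
  i ≤ g ∧ 1 ≤ t ∧ i + t ≤ g + 1 ∧ S ⊆ Finset.Icc 1 n ∧ 1 ∈ S ∧
  ((i = 0 ∧ t = 1) → 2 ≤ S.card) ∧
  ((i = 0 ∧ t = 2) → 1 ≤ S.card) ∧
  ((i = g ∧ t = 1) → 2 ≤ (Finset.Icc 1 n \ S).card) ∧
  ((i = g - 1 ∧ t = 2) → 1 ≤ (Finset.Icc 1 n \ S).card)

/-- The stability hyperplane `H(i,t,S;k)` inside the space `W` with
coordinates `x(i,S)` (for divisorial vine triples) and `y j` (for markings):
for `t = 1` it is `{x(i,S) = k + 1/2}`, and for `t ≥ 2` it is the affine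
hyperplane from equation (walls2) of the paper. -/
noncomputable def Hyp (g n : ℕ) (d : ℤ) (i t : ℕ) (S : Finset ℕ) (k : ℤ) :
    Set (((ℕ × Finset ℕ) → ℝ) × (ℕ → ℝ)) :=
  if t = 1 then
    {w | w.1 (i, S) = (k : ℝ) + 1 / 2}
  else
    {w | ((2 * (g : ℝ) - 2 * (i : ℝ) - (t : ℝ)) / (2 * (g : ℝ) - 2)) *
          (∑ j ∈ S, w.2 j) +
        ((2 * (i : ℝ) - 2 + (t : ℝ)) / (2 * (g : ℝ) - 2)) *
          ((d : ℝ) - ∑ j ∈ Finset.Icc 1 n \ S, w.2 j) =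
        (k : ℝ) + (t : ℝ) / 2}


/-- Proposition: for `S ⊊ {1,…,n}`, if two distinct hyperplane data
`(i₁,t₁,k₁) ≠ (i₂,t₂,k₂)` with `t₁, t₂ ≥ 2` give the same hyperplane
`H(i₁,t₁,S;k₁) = H(i₂,t₂,S;k₂)`, then `2i₁ + t₁ = 2i₂ + t₂`. -/
theorem good_walls (g n : ℕ) (d : ℤ) (hg : 2 ≤ g) (hn : 1 ≤ n)
    (S : Finset ℕ) (hS : S ⊂ Finset.Icc 1 n)
    (i₁ t₁ i₂ t₂ : ℕ) (k₁ k₂ : ℤ)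
    (h₁ : VineTriple g n i₁ t₁ S) (h₂ : VineTriple g n i₂ t₂ S)
    (ht₁ : 2 ≤ t₁) (ht₂ : 2 ≤ t₂)
    (hne : ¬ (i₁ = i₂ ∧ t₁ = t₂ ∧ k₁ = k₂))
    (hH : Hyp g n d i₁ t₁ S k₁ = Hyp g n d i₂ t₂ S k₂) :
    2 * i₁ + t₁ = 2 * i₂ + t₂ := by
  have hden : (2 * (g:ℝ) - 2) ≠ 0 := by
    have h2 : (2:ℝ) ≤ (g:ℝ) := by exact_mod_cast hg
    nlinarith
  obtain ⟨m, hmI, hmS⟩ := Finset.exists_of_ssubset hS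
  have h1S : 1 ∈ S := h₁.2.2.2.2.1
  have h1D : (1:ℕ) ∉ Finset.Icc 1 n \ S := fun h => (Finset.mem_sdiff.mp h).2 h1S
  have hmD : m ∈ Finset.Icc 1 n \ S := Finset.mem_sdiff.mpr ⟨hmI, hmS⟩
  set A₁ : ℝ := (2*(g:ℝ) - 2*(i₁:ℝ) - (t₁:ℝ))/(2*(g:ℝ)-2) with hA1
  set B₁ : ℝ := (2*(i₁:ℝ) - 2 + (t₁:ℝ))/(2*(g:ℝ)-2) with hB1
  set A₂ : ℝ := (2*(g:ℝ) - 2*(i₂:ℝ) - (t₂:ℝ))/(2*(g:ℝ)-2) with hA2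
  set B₂ : ℝ := (2*(i₂:ℝ) - 2 + (t₂:ℝ))/(2*(g:ℝ)-2) with hB2
  have hAB1 : A₁ + B₁ = 1 := by rw [hA1, hB1, ← add_div, div_eq_one_iff_eq hden]; ring
  have hAB2 : A₂ + B₂ = 1 := by rw [hA2, hB2, ← add_div, div_eq_one_iff_eq hden]; ring
  have hsum1 : ∀ s u : ℝ, (∑ j ∈ S, (if j = 1 then s else if j = m then u else 0)) = s := by
    intro s u
    rw [Finset.sum_congr rfl (g := fun j => if j = 1 then s else 0)
      (fun j hj => by
        by_cases h : j = 1
        · simp [h]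
        · simp only [if_neg h]
          rw [if_neg]
          rintro rfl
          exact hmS hj)]
    rw [Finset.sum_ite_eq' S 1 (fun _ => s), if_pos h1S]
  have hsum2 : ∀ s u : ℝ,
      (∑ j ∈ Finset.Icc 1 n \ S, (if j = 1 then s else if j = m then u else 0)) = u := by
    intro s u
    rw [Finset.sum_congr rfl (g := fun j => if j = m then u else 0)
      (fun j hj => by
        by_cases h : j = 1
        · exact absurd (h ▸ hj) h1D
        · simp [h])]
    rw [Finset.sum_ite_eq' _ m (fun _ => u), if_pos hmD]
  have ht1ne : t₁ ≠ 1 := by omega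
  have ht2ne : t₂ ≠ 1 := by omega
  have key : ∀ s u : ℝ, (A₁ * s + B₁ * ((d:ℝ) - u) = (k₁:ℝ) + (t₁:ℝ)/2) ↔
      (A₂ * s + B₂ * ((d:ℝ) - u) = (k₂:ℝ) + (t₂:ℝ)/2) := by
    intro s u
    have h := Set.ext_iff.mp hH
      (⟨fun _ => 0, fun j => if j = 1 then s else if j = m then u else 0⟩)
    simp only [Hyp, if_neg ht1ne, if_neg ht2ne, Set.mem_setOf_eq, hsum1 s u, hsum2 s u] at h
    rw [hA1, hB1, hA2, hB2]
    exact h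
  set C : ℝ := (k₁:ℝ) + (t₁:ℝ)/2 - B₁*(d:ℝ) with hC
  have e1 := (key C (-C)).mp (by rw [hC]; linear_combination ((k₁:ℝ) + (t₁:ℝ)/2 - B₁*(d:ℝ)) * hAB1)
  have e2 := (key (C + B₁) (-C + A₁)).mp (by rw [hC]; linear_combination ((k₁:ℝ) + (t₁:ℝ)/2 - B₁*(d:ℝ)) * hAB1)
  have e3 : A₂ * B₁ - B₂ * A₁ = 0 := by linear_combination e2 - e1
  have hA : A₁ = A₂ := by linear_combination -e3 + A₂ * hAB1 - A₁ * hAB2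
  rw [hA1, hA2, div_eq_div_iff hden hden] at hA
  have : (2*(i₁:ℝ) + (t₁:ℝ)) = 2*(i₂:ℝ) + (t₂:ℝ) := by
    have := mul_right_cancel₀ hden hA
    linarith [mul_left_cancel₀ hden (by linarith : (2*(g:ℝ)-2) * (2*(g:ℝ) - 2*(i₁:ℝ) - (t₁:ℝ)) = (2*(g:ℝ)-2) * (2*(g:ℝ) - 2*(i₂:ℝ) - (t₂:ℝ)))]
  exact_mod_cast this


end Paper
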